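/- Let p < q < r be odd primes, write Φ_{pqr}(x) = Σ_i c_i x^i and Φ_{pq}(x) = Σ_m d_m x^m (with c_i = 0 for i outside [0, φ(pqr)] and d_m = 0 for m outside [0, φ(pq)]). Then for every integer i, c_i = Σ d_m χ_{mr}(i), where the sum is over all integers m with 0 ≤ m ≤ φ(pq) and mr + p + q ≥ i + 1 + pq. -/

import Mathlib

/-- The map `χ_n : ℤ → {0, ±1}` from the paper (depending on `p` and `q`).
Here `x % (p*q)` plays the role of `x̄`, the representative of `x` modulo `pq`
lying in `[0, pq − 1]`. -/
def chi (p q : ℕ) (n i : ℤ) : ℤ :=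
  if ((i + 1) % (p * q) ≤ (n + p + q) % (p * q) ∧ (n + q) % (p * q) < (i + 1) % (p * q)) ∨
     ((i + 1) % (p * q) ≤ (n + p + q) % (p * q) ∧ (n + p + q) % (p * q) < (n + q) % (p * q)) ∨
     ((n + p + q) % (p * q) < (n + q) % (p * q) ∧ (n + q) % (p * q) < (i + 1) % (p * q))
  then 1
  else if ((i + 1) % (p * q) ≤ (n + p) % (p * q) ∧ n % (p * q) < (i + 1) % (p * q)) ∨
     ((i + 1) % (p * q) ≤ (n + p) % (p * q) ∧ (n + p) % (p * q) < n % (p * q)) ∨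
     ((n + p) % (p * q) < n % (p * q) ∧ n % (p * q) < (i + 1) % (p * q))
  then -1
  else 0

/-- Integer-indexed coefficient of a polynomial: `coeffZ P i = 0` for `i < 0`. -/
def coeffZ (P : Polynomial ℤ) (i : ℤ) : ℤ :=
  if 0 ≤ i then P.coeff i.toNat else 0

namespace CyclAux
open Polynomial Finset


def E (p q : ℕ) (j : ℤ) : ℤ :=
  ((p + q - (p:ℤ) * q - 1 - j) / ((p:ℤ) * q) - (p + q - (p:ℤ) * q - 1 - j - p) / ((p:ℤ) * q))
  - ((p + q - (p:ℤ) * q - 1 - j - q) / ((p:ℤ) * q)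
      - (p + q - (p:ℤ) * q - 1 - j - p - q) / ((p:ℤ) * q))

def etil (p q : ℕ) (j : ℤ) : ℤ :=
  if j ≤ (p:ℤ) + q - (p:ℤ) * q - 1 then E p q j else 0

theorem ediv_eq {N a k r : ℤ} (hN : 0 < N) (h : a = N * k + r) (h0 : 0 ≤ r) (h1 : r < N) :
    a / N = k := by
  subst h
  rw [add_comm, Int.add_mul_ediv_left _ _ hN.ne', Int.ediv_eq_zero_of_lt h0 h1, zero_add]

theorem neg_div {N s : ℤ} (hN : 0 < N) (h0 : -N ≤ s) (h1 : s < 0) : s / N = -1 :=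
  ediv_eq hN (k := -1) (r := s + N) (by ring) (by omega) (by omega)

theorem dvd_small {N x : ℤ} (hN : 0 < N) (h : N ∣ x) (h1 : -N < x) (h2 : x < N) : x = 0 := by
  obtain ⟨k, rfl⟩ := h
  rcases lt_trichotomy k 0 with hk | rfl | hk
  · nlinarith
  · ring
  · nlinarith

theorem succ_diff {N : ℤ} (hN : 0 < N) (s : ℤ) :
    s / N - (s - 1) / N = if N ∣ s then 1 else 0 := by
  have h0 : 0 ≤ s % N := Int.emod_nonneg s hN.ne'
  have h1 : s % N < N := Int.emod_lt_of_pos s hN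
  have hsk : s = N * (s / N) + s % N := by
    have := Int.mul_ediv_add_emod s N; omega
  by_cases h : s % N = 0
  · rw [if_pos ⟨s / N, by linarith⟩,
      ediv_eq (a := s - 1) hN (k := s / N - 1) (r := N - 1)
        (by linear_combination hsk + h) (by omega) (by omega)]
    ring
  · rw [if_neg (fun hdvd => h (Int.emod_eq_zero_of_dvd hdvd)),
      ediv_eq (a := s - 1) hN (k := s / N) (r := s % N - 1)
        (by linear_combination hsk) (by omega) (by omega)]
    ring

theorem E_sub_N (p q : ℕ) (hN : (0:ℤ) < (p:ℤ) * q) (j : ℤ) :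
    E p q (j - (p:ℤ) * q) = E p q j := by
  have hadd : ∀ y : ℤ, (y + (p:ℤ) * q) / ((p:ℤ) * q) = y / ((p:ℤ) * q) + 1 := fun y => by
    rw [show y + (p:ℤ) * q = y + ((p:ℤ) * q) * 1 by ring, Int.add_mul_ediv_left _ _ hN.ne']
  rw [E, E,
    show ((p:ℤ) + q - (p:ℤ)*q - 1 - (j - (p:ℤ)*q) - p - q)
      = ((p:ℤ) + q - (p:ℤ)*q - 1 - j - p - q) + (p:ℤ)*q from by ring,
    show ((p:ℤ) + q - (p:ℤ)*q - 1 - (j - (p:ℤ)*q) - q)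
      = ((p:ℤ) + q - (p:ℤ)*q - 1 - j - q) + (p:ℤ)*q from by ring,
    show ((p:ℤ) + q - (p:ℤ)*q - 1 - (j - (p:ℤ)*q) - p)
      = ((p:ℤ) + q - (p:ℤ)*q - 1 - j - p) + (p:ℤ)*q from by ring,
    show ((p:ℤ) + q - (p:ℤ)*q - 1 - (j - (p:ℤ)*q))
      = ((p:ℤ) + q - (p:ℤ)*q - 1 - j) + (p:ℤ)*q from by ring,
    hadd, hadd, hadd, hadd]
  ring

theorem E_D (p q : ℕ) (hp : 0 < p) (hpq : p < q) (hs : (p:ℤ) + q + 1 ≤ (p:ℤ) * q) :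
    E p q ((p:ℤ) + q - (p:ℤ) * q - 1) = 1 := by
  have hpz : (0:ℤ) < (p:ℤ) := by exact_mod_cast hp
  have hqz : (p:ℤ) < (q:ℤ) := by exact_mod_cast hpq
  have hN : (0:ℤ) < (p:ℤ) * q := by nlinarith
  have e0 : ((p:ℤ) + q - (p:ℤ)*q - 1 - ((p:ℤ) + q - (p:ℤ)*q - 1)) / ((p:ℤ)*q) = 0 := by
    rw [show ((p:ℤ) + q - (p:ℤ)*q - 1 - ((p:ℤ) + q - (p:ℤ)*q - 1)) = 0 by ring]
    exact Int.zero_ediv _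
  rw [E, e0,
    neg_div hN (s := (p:ℤ) + q - (p:ℤ)*q - 1 - ((p:ℤ) + q - (p:ℤ)*q - 1) - p) (by omega) (by omega),
    neg_div hN (s := (p:ℤ) + q - (p:ℤ)*q - 1 - ((p:ℤ) + q - (p:ℤ)*q - 1) - q) (by omega) (by omega),
    neg_div hN (s := (p:ℤ) + q - (p:ℤ)*q - 1 - ((p:ℤ) + q - (p:ℤ)*q - 1) - p - q) (by omega) (by omega)]
  ring

theorem E_D1 (p q : ℕ) (hp : 0 < p) (hpq : p < q) (hs : (p:ℤ) + q + 1 ≤ (p:ℤ) * q) :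
    E p q ((p:ℤ) + q - (p:ℤ) * q) = 0 := by
  have hpz : (0:ℤ) < (p:ℤ) := by exact_mod_cast hp
  have hqz : (p:ℤ) < (q:ℤ) := by exact_mod_cast hpq
  have hN : (0:ℤ) < (p:ℤ) * q := by nlinarith
  rw [E,
    neg_div hN (s := (p:ℤ) + q - (p:ℤ)*q - 1 - ((p:ℤ) + q - (p:ℤ)*q)) (by omega) (by omega),
    neg_div hN (s := (p:ℤ) + q - (p:ℤ)*q - 1 - ((p:ℤ) + q - (p:ℤ)*q) - p) (by omega) (by omega),
    neg_div hN (s := (p:ℤ) + q - (p:ℤ)*q - 1 - ((p:ℤ) + q - (p:ℤ)*q) - q) (by omega) (by omega),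
    neg_div hN (s := (p:ℤ) + q - (p:ℤ)*q - 1 - ((p:ℤ) + q - (p:ℤ)*q) - p - q) (by omega) (by omega)]
  ring

theorem E_step (p q : ℕ) (hp : 0 < p) (hpq : p < q) (hs : (p:ℤ) + q + 1 ≤ (p:ℤ) * q)
    (j : ℤ) (hlo : (p:ℤ) + q - (p:ℤ)*q + 1 ≤ j) (hhi : j ≤ (p:ℤ) + q - 1) :
    E p q (j - 1) - E p q j =
      (if j = 0 then 1 else 0) - (if j = (p:ℤ) then 1 else 0) - (if j = (q:ℤ) then 1 else 0) := by
  have hpz : (0:ℤ) < (p:ℤ) := by exact_mod_cast hp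
  have hqz : (p:ℤ) < (q:ℤ) := by exact_mod_cast hpq
  have hN : (0:ℤ) < (p:ℤ) * q := by nlinarith
  have comb : E p q (j-1) - E p q j =
      ((((p:ℤ) + q - (p:ℤ)*q - j))/((p:ℤ)*q) - (((p:ℤ) + q - (p:ℤ)*q - j) - 1)/((p:ℤ)*q))
      - ((((p:ℤ) + q - (p:ℤ)*q - j) - p)/((p:ℤ)*q) - ((((p:ℤ) + q - (p:ℤ)*q - j) - p) - 1)/((p:ℤ)*q))
      - ((((p:ℤ) + q - (p:ℤ)*q - j) - q)/((p:ℤ)*q) - ((((p:ℤ) + q - (p:ℤ)*q - j) - q) - 1)/((p:ℤ)*q))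
      + ((((p:ℤ) + q - (p:ℤ)*q - j) - p - q)/((p:ℤ)*q) - ((((p:ℤ) + q - (p:ℤ)*q - j) - p - q) - 1)/((p:ℤ)*q)) := by
    rw [E, E]; ring_nf
  rw [comb, succ_diff hN, succ_diff hN, succ_diff hN, succ_diff hN]
  set N : ℤ := (p:ℤ) * q
  set s : ℤ := (p:ℤ) + q - N - j with hsdef
  have hd1 : (if N ∣ s then (1:ℤ) else 0) = 0 := by
    rw [if_neg]; intro h
    have := dvd_small hN h (by omega) (by omega); omega
  have hd2 : (if N ∣ (s - (p:ℤ)) then (1:ℤ) else 0) = (if j = (q:ℤ) then 1 else 0) := by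
    by_cases hj : j = (q:ℤ)
    · rw [if_pos hj, if_pos ⟨-1, by omega⟩]
    · rw [if_neg hj, if_neg]; intro h
      have h2 : N ∣ (s - (p:ℤ) + N) := dvd_add h (dvd_refl N)
      have := dvd_small hN h2 (by omega) (by omega); omega
  have hd3 : (if N ∣ (s - (q:ℤ)) then (1:ℤ) else 0) = (if j = (p:ℤ) then 1 else 0) := by
    by_cases hj : j = (p:ℤ)
    · rw [if_pos hj, if_pos ⟨-1, by omega⟩]
    · rw [if_neg hj, if_neg]; intro h
      have h2 : N ∣ (s - (q:ℤ) + N) := dvd_add h (dvd_refl N)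
      have := dvd_small hN h2 (by omega) (by omega); omega
  have hd4 : (if N ∣ (s - (p:ℤ) - q) then (1:ℤ) else 0) = (if j = 0 then 1 else 0) := by
    by_cases hj : j = 0
    · rw [if_pos hj, if_pos ⟨-1, by omega⟩]
    · rw [if_neg hj, if_neg]; intro h
      have h2 : N ∣ (s - (p:ℤ) - q + N) := dvd_add h (dvd_refl N)
      have := dvd_small hN h2 (by omega) (by omega); omega
  rw [hd1, hd2, hd3, hd4]; ring

theorem etil_rec (p q : ℕ) (hp : 0 < p) (hpq : p < q) (hs : (p:ℤ) + q + 1 ≤ (p:ℤ) * q)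
    (j : ℤ) :
    etil p q j - etil p q (j - 1) - etil p q (j - (p:ℤ) * q) + etil p q (j - (p:ℤ) * q - 1)
    = (if j = (p:ℤ) + q then 1 else 0) - (if j = (p:ℤ) then 1 else 0)
      - (if j = (q:ℤ) then 1 else 0) + (if j = 0 then 1 else 0) := by
  have hpz : (0:ℤ) < (p:ℤ) := by exact_mod_cast hp
  have hqz : (p:ℤ) < (q:ℤ) := by exact_mod_cast hpq
  have hN : (0:ℤ) < (p:ℤ) * q := by nlinarith
  set N : ℤ := (p:ℤ) * q with hNdef
  set D : ℤ := (p:ℤ) + q - N - 1 with hD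
  have hper : ∀ x : ℤ, E p q (x - N) = E p q x := E_sub_N p q hN
  have hDneg : D ≤ -2 := by omega
  have hper : ∀ x : ℤ, E p q (x - (p:ℤ)*q) = E p q x := E_sub_N p q hN
  simp only [etil]
  by_cases h1 : j ≤ (p:ℤ) + q - (p:ℤ)*q - 1
  · rw [if_pos h1, if_pos (by omega), if_pos (by omega), if_pos (by omega),
      hper j, show j - (p:ℤ)*q - 1 = (j-1) - (p:ℤ)*q by ring, hper (j-1),
      if_neg (by omega), if_neg (by omega), if_neg (by omega), if_neg (by omega)]
    ring
  · by_cases h2 : j ≤ (p:ℤ) + q - (p:ℤ)*q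
    · -- j = D + 1 = p + q - pq
      have hj : j = (p:ℤ) + q - (p:ℤ)*q := by omega
      rw [if_neg h1, if_pos (by omega), if_pos (by omega), if_pos (by omega),
        hper j, show j - (p:ℤ)*q - 1 = (j-1) - (p:ℤ)*q by ring, hper (j-1), hj,
        E_D1 p q hp hpq hs, if_neg (by omega), if_neg (by omega), if_neg (by omega),
        if_neg (by omega)]
      ring
    · by_cases h3 : j ≤ (p:ℤ) + q - 1
      · -- window
        rw [if_neg h1, if_neg (by omega), if_pos (by omega), if_pos (by omega),
          hper j, show j - (p:ℤ)*q - 1 = (j-1) - (p:ℤ)*q by ring, hper (j-1)]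
        have hstep := E_step p q hp hpq hs j (by omega) (by omega)
        rw [if_neg (show j ≠ (p:ℤ) + q by omega)]
        split_ifs at hstep ⊢ <;> linarith
      · by_cases h4 : j ≤ (p:ℤ) + q
        · -- j = p + q
          have hj : j = (p:ℤ) + q := by omega
          rw [if_neg h1, if_neg (by omega), if_neg (by omega), if_pos (by omega),
            show j - (p:ℤ)*q - 1 = (p:ℤ) + q - (p:ℤ)*q - 1 by omega, E_D p q hp hpq hs,
            if_pos hj, if_neg (by omega), if_neg (by omega), if_neg (by omega)]
          ring
        · rw [if_neg h1, if_neg (by omega), if_neg (by omega), if_neg (by omega),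
            if_neg (by omega), if_neg (by omega), if_neg (by omega), if_neg (by omega)]



theorem ind_helper {N pz : ℤ} (hN : 0 < N) (hp0 : 0 < pz) (hpN : pz < N) (s : ℤ) :
    s / N - (s - pz) / N = if s % N < pz then 1 else 0 := by
  have h := Int.mul_ediv_add_emod s N
  have h0 : 0 ≤ s % N := Int.emod_nonneg s hN.ne'
  have h1 : s % N < N := Int.emod_lt_of_pos s hN
  have hsk : s = N * (s / N) + s % N := by omega
  by_cases hc : s % N < pz
  · rw [if_pos hc, ediv_eq (a := s - pz) hN (k := s / N - 1) (r := s % N - pz + N)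
      (by linear_combination hsk) (by omega) (by omega)]
    ring
  · rw [if_neg hc, ediv_eq (a := s - pz) hN (k := s / N) (r := s % N - pz)
      (by linear_combination hsk) (by omega) (by omega)]
    ring

theorem two_cases {N y : ℤ} (hN : 0 < N) (h0 : 0 ≤ y) (h1 : y < 2 * N) :
    y % N = if y < N then y else y - N := by
  split_ifs with h
  · exact Int.emod_eq_of_lt h0 h
  · have : y % N = (y - N) % N := by
      conv_lhs => rw [show y = y - N + N * 1 by ring, Int.add_mul_emod_self_left]
    rw [this, Int.emod_eq_of_lt (by omega) (by omega)]

theorem emod_sub {N a b : ℤ} (hN : 0 < N) (ha : a % N = a) (hb : b % N = b) :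
    (a - b) % N = if b ≤ a then a - b else a - b + N := by
  have h0 : 0 ≤ a := by rw [← ha]; exact Int.emod_nonneg a hN.ne'
  have h1 : a < N := by rw [← ha]; exact Int.emod_lt_of_pos a hN
  have h0' : 0 ≤ b := by rw [← hb]; exact Int.emod_nonneg b hN.ne'
  have h1' : b < N := by rw [← hb]; exact Int.emod_lt_of_pos b hN
  split_ifs with h
  · exact Int.emod_eq_of_lt (by omega) (by omega)
  · conv_lhs => rw [show a - b = a - b + N + N * (-1) by ring, Int.add_mul_emod_self_left]
    exact Int.emod_eq_of_lt (by omega) (by omega)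

set_option maxHeartbeats 1000000 in
theorem key (N p q u a b c w tm tq : ℤ) (hp : 0 < p) (hq : p < q) (hs : p + q + 1 ≤ N)
    (h0u : 0 ≤ u) (h1u : u < N) (h0a : 0 ≤ a) (h1a : a < N)
    (h0b : 0 ≤ b) (h1b : b < N) (h0c : 0 ≤ c) (h1c : c < N) (h0w : 0 ≤ w) (h1w : w < N)
    (hb : b = a + p ∨ b = a + p - N) (hc : c = a + q ∨ c = a + q - N)
    (hw : w = a + p + q ∨ w = a + p + q - N)
    (htm : tm = w - u ∨ tm = w - u + N) (h0tm : 0 ≤ tm) (h1tm : tm < N)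
    (htq : tq = b - u ∨ tq = b - u + N) (h0tq : 0 ≤ tq) (h1tq : tq < N) :
    (if (u ≤ w ∧ c < u) ∨ (u ≤ w ∧ w < c) ∨ (w < c ∧ c < u) then (1:ℤ)
     else if (u ≤ b ∧ a < u) ∨ (u ≤ b ∧ b < a) ∨ (b < a ∧ a < u) then -1
     else 0)
    = (if tm < p then 1 else 0) - (if tq < p then 1 else 0) := by
  rcases hb with hb | hb <;> rcases hc with hc | hc <;> rcases hw with hw | hw <;>
    rcases htm with htm | htm <;> rcases htq with htq | htq <;>
    split_ifs <;> omega

theorem chi_eq_E (p q : ℕ) (hp : 0 < p) (hpq : p < q) (hs : (p:ℤ) + q + 1 ≤ (p:ℤ) * q)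
    (n i : ℤ) : chi p q n i = E p q (i - n) := by
  have hpz : (0:ℤ) < (p:ℤ) := by exact_mod_cast hp
  have hqz : (p:ℤ) < (q:ℤ) := by exact_mod_cast hpq
  have hN : (0:ℤ) < (p:ℤ) * q := mul_pos hpz (by omega)
  set N : ℤ := (p:ℤ) * q with hNdef
  set t : ℤ := (p:ℤ) + q - N - 1 - (i - n) with ht
  have hE : E p q (i - n) = (if t % N < (p:ℤ) then 1 else 0) -
      (if (t - q) % N < (p:ℤ) then 1 else 0) := by
    rw [E, ind_helper hN hpz (by omega),
      show ((p:ℤ) + q - N - 1 - (i-n) - q) = t - q from by ring,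
      show ((p:ℤ) + q - N - 1 - (i-n) - p - q) = t - q - p from by ring,
      ind_helper hN hpz (by omega)]
  set u : ℤ := (i + 1) % N with hu
  set a : ℤ := n % N with haa
  have h0u : 0 ≤ u := Int.emod_nonneg _ hN.ne'
  have h1u : u < N := Int.emod_lt_of_pos _ hN
  have h0a : 0 ≤ a := Int.emod_nonneg _ hN.ne'
  have h1a : a < N := Int.emod_lt_of_pos _ hN
  have hmodidem : ∀ x : ℤ, x % N % N = x % N := fun x => Int.emod_emod_of_dvd x dvd_rfl
  have hshift : ∀ x y : ℤ, (x + y) % N = (x % N + y) % N := fun x y =>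
    (Int.emod_add_emod x N y).symm
  have hb2 : (n + p) % N = if a + p < N then a + p else a + p - N := by
    rw [hshift n p, ← haa]; exact two_cases hN (by omega) (by omega)
  have hc2 : (n + q) % N = if a + q < N then a + q else a + q - N := by
    rw [hshift n q, ← haa]; exact two_cases hN (by omega) (by omega)
  have hw2 : (n + p + q) % N = if a + p + q < N then a + p + q else a + p + q - N := by
    rw [show n + (p:ℤ) + q = n + ((p:ℤ) + q) by ring, hshift n ((p:ℤ)+q), ← haa,
      show a + ((p:ℤ) + q) = a + p + q by ring]
    exact two_cases hN (by omega) (by omega)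
  have hbr : 0 ≤ (n + p) % N ∧ (n + p) % N < N :=
    ⟨Int.emod_nonneg _ hN.ne', Int.emod_lt_of_pos _ hN⟩
  have htm2 : t % N = if u ≤ (n+p+q) % N then (n+p+q) % N - u else (n+p+q) % N - u + N := by
    conv_lhs => rw [show t = (n + p + q) - (i + 1) + N * (-1) by rw [ht]; ring,
      Int.add_mul_emod_self_left, Int.sub_emod (n+p+q) (i+1) N]
    rw [emod_sub hN (hmodidem _) (hmodidem _), ← hu]
  have htq2 : (t - q) % N = if u ≤ (n+p) % N then (n+p) % N - u else (n+p) % N - u + N := by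
    conv_lhs => rw [show t - q = (n + p) - (i + 1) + N * (-1) by rw [ht]; ring,
      Int.add_mul_emod_self_left, Int.sub_emod (n+p) (i+1) N]
    rw [emod_sub hN (hmodidem _) (hmodidem _), ← hu]
  rw [chi, hE, ← hNdef, ← hu, ← haa]
  refine key N p q u a ((n+p) % N) ((n+q) % N) ((n+p+q) % N) (t % N) ((t - q) % N)
    hpz hqz (by omega) h0u h1u h0a h1a
    (Int.emod_nonneg _ hN.ne') (Int.emod_lt_of_pos _ hN)
    (Int.emod_nonneg _ hN.ne') (Int.emod_lt_of_pos _ hN)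
    (Int.emod_nonneg _ hN.ne') (Int.emod_lt_of_pos _ hN) ?_ ?_ ?_ ?_
    (Int.emod_nonneg _ hN.ne') (Int.emod_lt_of_pos _ hN) ?_
    (Int.emod_nonneg _ hN.ne') (Int.emod_lt_of_pos _ hN)
  · rw [hb2]; split_ifs <;> simp
  · rw [hc2]; split_ifs <;> simp
  · rw [hw2]; split_ifs <;> simp
  · rw [htm2]; split_ifs <;> simp
  · rw [htq2]; split_ifs <;> simp



open Polynomial

theorem coeffZ_add (P Q : ℤ[X]) (i : ℤ) : coeffZ (P + Q) i = coeffZ P i + coeffZ Q i := by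
  unfold coeffZ; split_ifs <;> simp

theorem coeffZ_sub (P Q : ℤ[X]) (i : ℤ) : coeffZ (P - Q) i = coeffZ P i - coeffZ Q i := by
  unfold coeffZ; split_ifs <;> simp

theorem coeffZ_mul_X_pow (P : ℤ[X]) (n : ℕ) (i : ℤ) :
    coeffZ (P * X ^ n) i = coeffZ P (i - n) := by
  unfold coeffZ
  by_cases h : 0 ≤ i
  · rw [if_pos h, coeff_mul_X_pow']
    by_cases h2 : (n : ℤ) ≤ i
    · rw [if_pos (by omega : n ≤ i.toNat), if_pos (by omega : (0:ℤ) ≤ i - n)]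
      congr 1; omega
    · rw [if_neg (by omega), if_neg (by omega)]
  · rw [if_neg h, if_neg (by omega)]

theorem coeffZ_combo (P : ℤ[X]) (a b : ℕ) (i : ℤ) :
    coeffZ (P * ((X ^ a - 1) * (X ^ b - 1))) i
      = coeffZ P (i - a - b) - coeffZ P (i - a) - coeffZ P (i - b) + coeffZ P i := by
  have h : P * ((X ^ a - 1) * (X ^ b - 1))
      = P * X ^ b * X ^ a - P * X ^ a - P * X ^ b + P := by ring
  rw [h, coeffZ_add, coeffZ_sub, coeffZ_sub]
  simp only [coeffZ_mul_X_pow]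

theorem keyq (q : ℕ) (hq : q.Prime) :
    (X - 1) * cyclotomic q ℤ = X ^ q - 1 := by
  have h := prod_cyclotomic_eq_X_pow_sub_one hq.pos ℤ
  rw [hq.divisors, Finset.prod_pair hq.ne_one.symm, cyclotomic_one] at h
  exact h

theorem key2 (p q : ℕ) (hp : p.Prime) (hq : q.Prime) (hne : p ≠ q) :
    cyclotomic (p * q) ℤ * ((X ^ p - 1) * (X ^ q - 1)) = (X ^ (p * q) - 1) * (X - 1) := by
  have hq0 : cyclotomic q ℤ ≠ 0 := cyclotomic_ne_zero q ℤ
  apply mul_right_cancel₀ hq0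
  have hdvd : ¬ p ∣ q := fun h => hne ((Nat.prime_dvd_prime_iff_eq hp hq).mp h)
  have hexp := Polynomial.cyclotomic_expand_eq_cyclotomic_mul hp hdvd ℤ
  rw [Nat.mul_comm q p] at hexp
  have hXp : expand ℤ p ((X : ℤ[X]) - 1) = X ^ p - 1 := by
    rw [map_sub, Polynomial.expand_X, map_one]
  have hXq : expand ℤ p ((X : ℤ[X]) ^ q - 1) = X ^ (p * q) - 1 := by
    rw [map_sub, map_pow, Polynomial.expand_X, map_one, ← pow_mul]
  calc cyclotomic (p*q) ℤ * ((X ^ p - 1) * (X ^ q - 1)) * cyclotomic q ℤ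
      = (cyclotomic (p*q) ℤ * cyclotomic q ℤ) * (X ^ p - 1) * (X ^ q - 1) := by ring
    _ = (expand ℤ p (cyclotomic q ℤ) * expand ℤ p ((X:ℤ[X]) - 1)) * (X ^ q - 1) := by
        rw [← hexp, hXp]
    _ = expand ℤ p (cyclotomic q ℤ * ((X:ℤ[X]) - 1)) * (X ^ q - 1) := by rw [map_mul]
    _ = expand ℤ p ((X:ℤ[X]) ^ q - 1) * (X ^ q - 1) := by
        rw [show cyclotomic q ℤ * ((X:ℤ[X]) - 1) = (X - 1) * cyclotomic q ℤ by ring,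
          keyq q hq]
    _ = (X ^ (p*q) - 1) * (X ^ q - 1) := by rw [hXq]
    _ = (X ^ (p*q) - 1) * (X - 1) * cyclotomic q ℤ := by
        rw [mul_assoc, keyq q hq]

theorem ident (p q r : ℕ) (hp : p.Prime) (hq : q.Prime) (hr : r.Prime)
    (hpq : p < q) (hqr : q < r) :
    cyclotomic (p * q * r) ℤ * ((X ^ (p * q) - 1) * (X ^ 1 - 1))
      = expand ℤ r (cyclotomic (p * q) ℤ) * ((X ^ p - 1) * (X ^ q - 1)) := by
  have hdvd : ¬ r ∣ p * q := by
    intro h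
    rcases (Nat.Prime.dvd_mul hr).mp h with h | h
    · exact absurd ((Nat.prime_dvd_prime_iff_eq hr hp).mp h) (by omega)
    · exact absurd ((Nat.prime_dvd_prime_iff_eq hr hq).mp h) (by omega)
  have hexp := Polynomial.cyclotomic_expand_eq_cyclotomic_mul hr hdvd ℤ
  rw [hexp, pow_one]
  have h2 := key2 p q hp hq (by omega)
  linear_combination (-(cyclotomic (p * q * r) ℤ)) * h2


open Polynomial Finset

def v (p q : ℕ) (j : ℤ) : ℤ :=
  (if j = (p:ℤ) + q then 1 else 0) - (if j = (p:ℤ) then 1 else 0)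
    - (if j = (q:ℤ) then 1 else 0) + (if j = 0 then 1 else 0)

theorem W_eq (p q r : ℕ) (hr : 0 < r) (j : ℤ) :
    coeffZ (expand ℤ r (cyclotomic (p * q) ℤ)) j
      = ∑ m ∈ range ((p * q).totient + 1),
          (cyclotomic (p * q) ℤ).coeff m * (if j = (m : ℤ) * r then 1 else 0) := by
  have hcast : ∀ b : ℕ, j = (b:ℤ) * r → j.toNat = r * b := by
    intro b hb
    have h2 : j = ((r * b : ℕ) : ℤ) := by push_cast; linarith
    omega
  by_cases h0 : 0 ≤ j
  · rw [coeffZ, if_pos h0, coeff_expand hr]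
    by_cases hdvd : r ∣ j.toNat
    · obtain ⟨m₀, hm₀⟩ := hdvd
      have hjm : j = (m₀ : ℤ) * r := by
        have : j = ((r * m₀ : ℕ) : ℤ) := by omega
        rw [this]; push_cast; ring
      have hdiv : j.toNat / r = m₀ := by rw [hm₀, Nat.mul_div_cancel_left m₀ hr]
      have huniq : ∀ b : ℕ, j = (b:ℤ) * r → b = m₀ := by
        intro b hb
        have := hcast b hb
        have hrne : r ≠ 0 := hr.ne'
        exact Nat.eq_of_mul_eq_mul_left hr (by omega)
      rw [if_pos ⟨m₀, hm₀⟩, hdiv]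
      by_cases hm : m₀ < (p * q).totient + 1
      · rw [Finset.sum_eq_single m₀]
        · rw [if_pos hjm, mul_one]
        · intro b _ hb
          rw [if_neg (fun hj => hb (huniq b hj)), mul_zero]
        · intro habs; exact absurd (Finset.mem_range.mpr hm) habs
      · rw [Finset.sum_eq_zero]
        · apply coeff_eq_zero_of_natDegree_lt
          rw [natDegree_cyclotomic]; omega
        · intro b hb
          have hbr := Finset.mem_range.mp hb
          rw [if_neg (fun hj => by have := huniq b hj; omega), mul_zero]
    · rw [if_neg hdvd, Finset.sum_eq_zero]
      intro b _
      rw [if_neg (fun hj => hdvd ⟨b, hcast b hj⟩), mul_zero]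
  · rw [coeffZ, if_neg h0, Finset.sum_eq_zero]
    intro b _
    rw [if_neg, mul_zero]
    intro hj
    have : (0:ℤ) ≤ (b:ℤ) * r := by positivity
    omega


theorem rhs_coeff (p q r : ℕ) (hr : 0 < r) (k : ℤ) :
    coeffZ (expand ℤ r (cyclotomic (p * q) ℤ) * ((X ^ p - 1) * (X ^ q - 1))) k
      = ∑ m ∈ range ((p * q).totient + 1),
          (cyclotomic (p * q) ℤ).coeff m * v p q (k - (m : ℤ) * r) := by
  rw [coeffZ_combo, W_eq p q r hr, W_eq p q r hr, W_eq p q r hr, W_eq p q r hr,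
    ← Finset.sum_sub_distrib, ← Finset.sum_sub_distrib, ← Finset.sum_add_distrib]
  apply Finset.sum_congr rfl
  intro m _
  rw [v]
  split_ifs <;> omega

theorem c_rec (p q r : ℕ) (hp : p.Prime) (hq : q.Prime) (hr : r.Prime)
    (hpq : p < q) (hqr : q < r) (k : ℤ) :
    coeffZ (cyclotomic (p * q * r) ℤ) k - coeffZ (cyclotomic (p * q * r) ℤ) (k - 1)
      - coeffZ (cyclotomic (p * q * r) ℤ) (k - (p:ℤ) * q)
      + coeffZ (cyclotomic (p * q * r) ℤ) (k - (p:ℤ) * q - 1)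
      = ∑ m ∈ range ((p * q).totient + 1),
          (cyclotomic (p * q) ℤ).coeff m * v p q (k - (m : ℤ) * r) := by
  have h := congrArg (fun P : Polynomial ℤ => coeffZ P k) (ident p q r hp hq hr hpq hqr)
  simp only [coeffZ_combo, rhs_coeff p q r hr.pos k] at h
  rw [← h, Nat.cast_mul, Nat.cast_one]
  ring

theorem S_rec (p q r : ℕ) (hp : 0 < p) (hpq : p < q) (hs : (p:ℤ) + q + 1 ≤ (p:ℤ) * q)
    (k : ℤ) :
    (∑ m ∈ range ((p * q).totient + 1),
        (cyclotomic (p * q) ℤ).coeff m * etil p q (k - (m : ℤ) * r))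
      - (∑ m ∈ range ((p * q).totient + 1),
          (cyclotomic (p * q) ℤ).coeff m * etil p q (k - 1 - (m : ℤ) * r))
      - (∑ m ∈ range ((p * q).totient + 1),
          (cyclotomic (p * q) ℤ).coeff m * etil p q (k - (p:ℤ) * q - (m : ℤ) * r))
      + (∑ m ∈ range ((p * q).totient + 1),
          (cyclotomic (p * q) ℤ).coeff m * etil p q (k - (p:ℤ) * q - 1 - (m : ℤ) * r))
      = ∑ m ∈ range ((p * q).totient + 1),
          (cyclotomic (p * q) ℤ).coeff m * v p q (k - (m : ℤ) * r) := by
  rw [← Finset.sum_sub_distrib, ← Finset.sum_sub_distrib, ← Finset.sum_add_distrib]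
  apply Finset.sum_congr rfl
  intro m _
  have h := etil_rec p q hp hpq hs (k - (m : ℤ) * r)
  rw [show k - 1 - (m:ℤ)*r = k - (m:ℤ)*r - 1 by ring,
    show k - (p:ℤ)*q - (m:ℤ)*r = k - (m:ℤ)*r - (p:ℤ)*q by ring,
    show k - (p:ℤ)*q - 1 - (m:ℤ)*r = k - (m:ℤ)*r - (p:ℤ)*q - 1 by ring, v]
  linear_combination ((cyclotomic (p * q) ℤ).coeff m) * h

theorem vanishC (p q r : ℕ) (hp : p.Prime) (hq : q.Prime) (hr : r.Prime)
    (hpq : p < q) (hqr : q < r) (i : ℤ)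
    (hi : (((p*q).totient * r : ℕ) : ℤ) ≤ i) :
    coeffZ (cyclotomic (p * q * r) ℤ) i = 0 := by
  have hcop : Nat.Coprime (p * q) r :=
    Nat.Coprime.mul ((Nat.coprime_primes hp hr).mpr (by omega))
      ((Nat.coprime_primes hq hr).mpr (by omega))
  have htot : (p * q * r).totient = (p * q).totient * (r - 1) := by
    rw [Nat.totient_mul hcop, Nat.totient_prime hr]
  have htpos : 0 < (p * q).totient := Nat.totient_pos.mpr (Nat.mul_pos hp.pos hq.pos)
  rw [coeffZ, if_pos (by omega)]
  apply coeff_eq_zero_of_natDegree_lt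
  rw [natDegree_cyclotomic, htot]
  have h1 : (p*q).totient * (r-1) < (p*q).totient * r :=
    mul_lt_mul_of_pos_left (by omega) htpos
  omega

end CyclAux

/-- For odd primes `p < q < r`, writing `Φ_{pqr} = Σ c_i x^i` and `Φ_{pq} = Σ d_m x^m`,
for every integer `i` one has `c_i = Σ d_m χ_{mr}(i)`, the sum being over all `m`
with `0 ≤ m ≤ φ(pq)` and `m r + p + q ≥ i + 1 + pq`. -/
theorem coeff_eq_sum_chi (p q r : ℕ) (hp : p.Prime) (hq : q.Prime) (hr : r.Prime)
    (hop : Odd p) (hoq : Odd q) (hor : Odd r) (hpq : p < q) (hqr : q < r) (i : ℤ) :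
    coeffZ (Polynomial.cyclotomic (p * q * r) ℤ) i =
      ∑ m ∈ (Finset.range (Nat.totient (p * q) + 1)).filter
          (fun m : ℕ => i + 1 + (p : ℤ) * q ≤ (m : ℤ) * r + p + q),
        (Polynomial.cyclotomic (p * q) ℤ).coeff m * chi p q ((m : ℤ) * r) i := by

  classical
  open Polynomial Finset CyclAux in
  have hp2 : 2 ≤ p := hp.two_le
  have hq2 : 2 ≤ q := hq.two_le
  have hpz : (0:ℤ) < (p:ℤ) := by exact_mod_cast hp.pos
  have hqz : (p:ℤ) < (q:ℤ) := by exact_mod_cast hpq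
  have hs : (p:ℤ) + q + 1 ≤ (p:ℤ) * q := by
    have h1 : (1:ℤ) ≤ (p:ℤ) - 1 := by omega
    have h2 : (2:ℤ) ≤ (q:ℤ) - 1 := by
      have : (2:ℤ) < (q:ℤ) := by exact_mod_cast lt_of_le_of_lt hp2 hpq
      omega
    nlinarith
  have hrz : (0:ℤ) < (r:ℤ) := by exact_mod_cast hr.pos
  have vanishS : ∀ k : ℤ, ((((p*q).totient * r : ℕ)) : ℤ) ≤ k →
      (∑ m ∈ Finset.range ((p * q).totient + 1),
        (Polynomial.cyclotomic (p * q) ℤ).coeff m * CyclAux.etil p q (k - (m : ℤ) * r)) = 0 := by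
    intro k hk
    apply Finset.sum_eq_zero
    intro m hm
    have hmz : (m:ℤ) ≤ (((p*q).totient : ℕ) : ℤ) := by
      have := Finset.mem_range.mp hm
      exact_mod_cast by omega
    have hmr : (m:ℤ) * r ≤ (((p*q).totient : ℕ) : ℤ) * r :=
      mul_le_mul_of_nonneg_right hmz (by positivity)
    rw [CyclAux.etil, if_neg (by push_cast at hk ⊢; omega), mul_zero]
  have main : ∀ n : ℕ, ∀ k : ℤ, ((((p*q).totient * r : ℕ)) : ℤ) ≤ k + n →
      coeffZ (Polynomial.cyclotomic (p * q * r) ℤ) k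
        = ∑ m ∈ Finset.range ((p * q).totient + 1),
            (Polynomial.cyclotomic (p * q) ℤ).coeff m * CyclAux.etil p q (k - (m : ℤ) * r) := by
    intro n
    induction n with
    | zero =>
      intro k hk
      rw [vanishS k (by omega), vanishC p q r hp hq hr hpq hqr k (by omega)]
    | succ n ih =>
      intro k hk
      by_cases hc : ((((p*q).totient * r : ℕ)) : ℤ) ≤ k + n
      · exact ih k hc
      · have e1 := c_rec p q r hp hq hr hpq hqr (k + (p:ℤ)*q + 1)
        have e2 := S_rec p q r hp.pos hpq hs (k + (p:ℤ)*q + 1)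
        rw [show k + (p:ℤ)*q + 1 - (p:ℤ)*q - 1 = k by ring,
          show k + (p:ℤ)*q + 1 - (p:ℤ)*q = k + 1 by ring,
          show k + (p:ℤ)*q + 1 - 1 = k + (p:ℤ)*q by ring] at e1 e2
        have i1 := ih (k+1) (by push_cast at hk hc ⊢; omega)
        have i2 := ih (k + (p:ℤ)*q) (by push_cast at hk hc ⊢; omega)
        have i3 := ih (k + (p:ℤ)*q + 1) (by push_cast at hk hc ⊢; omega)
        linarith
  have hCS := main ((((((p*q).totient * r : ℕ)) : ℤ) - i).toNat) i (by omega)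
  rw [hCS, Finset.sum_filter]
  apply Finset.sum_congr rfl
  intro m _
  by_cases hcond : i + 1 + (p : ℤ) * q ≤ (m : ℤ) * r + p + q
  · rw [if_pos hcond, CyclAux.etil, if_pos (by omega),
      CyclAux.chi_eq_E p q hp.pos hpq hs ((m:ℤ) * r) i]
  · rw [if_neg hcond, CyclAux.etil, if_neg (by omega), mul_zero]
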